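/- Let γ > 0 and h ∈ C²(ℝ₊;ℝ) with h ≥ 0, h' ≥ 0 and h'' ≥ 0 on ℝ₊. Assume there are c > 0, ε ∈ (−∞, γ/2) and x₀ ∈ ℝ₊ such that h(x) ≤ c e^{εx} and h'(x) ≤ c e^{εx} for all x ≥ x₀. Then ∫₀^∞ h'(x)² e^{-γx} dx ≤ (γ²/2) ∫₀^∞ h(x)² e^{-γx} dx. -/

import Mathlib

open MeasureTheory Set Real Filter ENNReal Topology

/-- If `h ∈ C²(ℝ₊)` with `h, h', h'' ≥ 0` and `h(x) ≤ c e^{εx}`, `h'(x) ≤ c e^{εx}` for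
`x ≥ x₀`, where `ε < γ/2`, then `∫₀^∞ h'(x)² e^{-γx} dx ≤ (γ²/2) ∫₀^∞ h(x)² e^{-γx} dx`. -/
theorem stmt_6 (γ : ℝ) (hγ : 0 < γ) (h h' h'' : ℝ → ℝ)
    (hd1 : ∀ x ∈ Set.Ici (0 : ℝ), HasDerivWithinAt h (h' x) (Set.Ici 0) x)
    (hd2 : ∀ x ∈ Set.Ici (0 : ℝ), HasDerivWithinAt h' (h'' x) (Set.Ici 0) x)
    (hcont : ContinuousOn h'' (Set.Ici 0))
    (hpos : ∀ x, 0 ≤ x → 0 ≤ h x) (hpos' : ∀ x, 0 ≤ x → 0 ≤ h' x)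
    (hpos'' : ∀ x, 0 ≤ x → 0 ≤ h'' x)
    (c ε x₀ : ℝ) (hc : 0 < c) (hε : ε < γ / 2) (hx₀ : 0 ≤ x₀)
    (hbd : ∀ x, x₀ ≤ x → h x ≤ c * Real.exp (ε * x))
    (hbd' : ∀ x, x₀ ≤ x → h' x ≤ c * Real.exp (ε * x)) :
    (∫⁻ x in Set.Ioi (0 : ℝ), ENNReal.ofReal (h' x ^ 2 * Real.exp (-γ * x)))
      ≤ ENNReal.ofReal (γ ^ 2 / 2) *
        ∫⁻ x in Set.Ioi (0 : ℝ), ENNReal.ofReal (h x ^ 2 * Real.exp (-γ * x)) := by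
  have hch : ContinuousOn h (Set.Ici 0) := fun x hx => (hd1 x hx).continuousWithinAt
  have hch' : ContinuousOn h' (Set.Ici 0) := fun x hx => (hd2 x hx).continuousWithinAt
  have contE : Continuous (fun x : ℝ => Real.exp (-γ * x)) := by continuity
  set K : ℝ := c ^ 2 + γ * c ^ 2 / 2 with hK
  -- the key finite-interval estimate
  have key : ∀ T : ℝ, 0 ≤ T → x₀ ≤ T →
      (∫ x in (0:ℝ)..T, h' x ^ 2 * Real.exp (-γ * x)) ≤
        K * Real.exp ((2 * ε - γ) * T)
          + γ ^ 2 / 2 * ∫ x in (0:ℝ)..T, h x ^ 2 * Real.exp (-γ * x) := by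
    intro T hT hTx
    have hIcc : Set.Icc (0:ℝ) T ⊆ Set.Ici 0 := Set.Icc_subset_Ici_self
    have ch : ContinuousOn h (Set.Icc 0 T) := hch.mono hIcc
    have ch' : ContinuousOn h' (Set.Icc 0 T) := hch'.mono hIcc
    have ch'' : ContinuousOn h'' (Set.Icc 0 T) := hcont.mono hIcc
    have cE : ContinuousOn (fun x : ℝ => Real.exp (-γ * x)) (Set.Icc 0 T) :=
      contE.continuousOn
    have i1 : IntervalIntegrable (fun x => h' x ^ 2 * Real.exp (-γ * x)) volume 0 T :=
      (((ch'.pow 2).mul cE)).intervalIntegrable_of_Icc hT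
    have i2 : IntervalIntegrable (fun x => h x * h'' x * Real.exp (-γ * x)) volume 0 T :=
      (((ch.mul ch'').mul cE)).intervalIntegrable_of_Icc hT
    have i3 : IntervalIntegrable (fun x => h x * h' x * Real.exp (-γ * x)) volume 0 T :=
      (((ch.mul ch').mul cE)).intervalIntegrable_of_Icc hT
    have i4 : IntervalIntegrable (fun x => h x ^ 2 * Real.exp (-γ * x)) volume 0 T :=
      (((ch.pow 2).mul cE)).intervalIntegrable_of_Icc hT
    -- derivative of the exponential
    have He : ∀ x : ℝ, HasDerivAt (fun y : ℝ => Real.exp (-γ * y))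
        (-γ * Real.exp (-γ * x)) x := by
      intro x
      have := ((hasDerivAt_id x).const_mul (-γ)).exp
      simpa [mul_comm] using this
    -- first integration by parts
    have ftc1 : (∫ x in (0:ℝ)..T,
          (h' x ^ 2 + h x * h'' x - γ * (h x * h' x)) * Real.exp (-γ * x))
        = h T * h' T * Real.exp (-γ * T) - h 0 * h' 0 * Real.exp (-γ * 0) := by
      apply intervalIntegral.integral_eq_sub_of_hasDeriv_right_of_le hT
      · exact (ch.mul ch').mul cE
      · intro x hx
        have hx0 : (0:ℝ) < x := hx.1
        have Hh : HasDerivAt h (h' x) x :=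
          (hd1 x hx0.le).hasDerivAt (Ici_mem_nhds hx0)
        have Hh' : HasDerivAt h' (h'' x) x :=
          (hd2 x hx0.le).hasDerivAt (Ici_mem_nhds hx0)
        have : HasDerivAt (fun y => h y * h' y * Real.exp (-γ * y))
            ((h' x * h' x + h x * h'' x) * Real.exp (-γ * x)
              + h x * h' x * (-γ * Real.exp (-γ * x))) x :=
          (Hh.mul Hh').mul (He x)
        have := this.hasDerivWithinAt (s := Set.Ioi x)
        convert this using 1
        ring
      · have : ContinuousOn
            (fun x => (h' x ^ 2 + h x * h'' x - γ * (h x * h' x)) * Real.exp (-γ * x))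
            (Set.Icc 0 T) :=
          (((ch'.pow 2).add (ch.mul ch'')).sub ((ch.mul ch').const_smul γ)).mul cE
        exact this.intervalIntegrable_of_Icc hT
    -- second integration by parts
    have ftc2 : (∫ x in (0:ℝ)..T,
          (h x * h' x - γ / 2 * h x ^ 2) * Real.exp (-γ * x))
        = h T ^ 2 / 2 * Real.exp (-γ * T) - h 0 ^ 2 / 2 * Real.exp (-γ * 0) := by
      apply intervalIntegral.integral_eq_sub_of_hasDeriv_right_of_le hT
      · exact ((ch.pow 2).div_const 2).mul cE
      · intro x hx
        have hx0 : (0:ℝ) < x := hx.1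
        have Hh : HasDerivAt h (h' x) x :=
          (hd1 x hx0.le).hasDerivAt (Ici_mem_nhds hx0)
        have : HasDerivAt (fun y => h y ^ 2 / 2 * Real.exp (-γ * y))
            (2 * h x ^ 1 * h' x / 2 * Real.exp (-γ * x)
              + h x ^ 2 / 2 * (-γ * Real.exp (-γ * x))) x :=
          ((Hh.pow 2).div_const 2).mul (He x)
        have := this.hasDerivWithinAt (s := Set.Ioi x)
        convert this using 1
        ring
      · have : ContinuousOn
            (fun x => (h x * h' x - γ / 2 * h x ^ 2) * Real.exp (-γ * x))
            (Set.Icc 0 T) :=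
          ((ch.mul ch').sub ((ch.pow 2).const_smul (γ/2))).mul cE
        exact this.intervalIntegrable_of_Icc hT
    -- split the integrals
    have split1 : (∫ x in (0:ℝ)..T,
          (h' x ^ 2 + h x * h'' x - γ * (h x * h' x)) * Real.exp (-γ * x))
        = (∫ x in (0:ℝ)..T, h' x ^ 2 * Real.exp (-γ * x))
          + (∫ x in (0:ℝ)..T, h x * h'' x * Real.exp (-γ * x))
          - γ * ∫ x in (0:ℝ)..T, h x * h' x * Real.exp (-γ * x) := by
      rw [← intervalIntegral.integral_const_mul, ← intervalIntegral.integral_add i1 i2,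
        ← intervalIntegral.integral_sub (i1.add i2) (i3.const_mul γ)]
      apply intervalIntegral.integral_congr
      intro x _
      ring
    have split2 : (∫ x in (0:ℝ)..T,
          (h x * h' x - γ / 2 * h x ^ 2) * Real.exp (-γ * x))
        = (∫ x in (0:ℝ)..T, h x * h' x * Real.exp (-γ * x))
          - γ / 2 * ∫ x in (0:ℝ)..T, h x ^ 2 * Real.exp (-γ * x) := by
      rw [← intervalIntegral.integral_const_mul, ← intervalIntegral.integral_sub i3
        (i4.const_mul (γ/2))]
      apply intervalIntegral.integral_congr
      intro x _
      ring
    -- nonnegativity facts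
    have n2 : 0 ≤ ∫ x in (0:ℝ)..T, h x * h'' x * Real.exp (-γ * x) := by
      apply intervalIntegral.integral_nonneg hT
      intro u hu
      have hu0 : (0:ℝ) ≤ u := hu.1
      exact mul_nonneg (mul_nonneg (hpos u hu0) (hpos'' u hu0)) (Real.exp_nonneg _)
    have hT0 : (0:ℝ) ≤ h 0 * h' 0 * Real.exp (-γ * 0) :=
      mul_nonneg (mul_nonneg (hpos 0 le_rfl) (hpos' 0 le_rfl)) (Real.exp_nonneg _)
    have hT0' : (0:ℝ) ≤ h 0 ^ 2 / 2 * Real.exp (-γ * 0) :=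
      mul_nonneg (by positivity) (Real.exp_nonneg _)
    -- boundary bounds
    have hhT : h T ≤ c * Real.exp (ε * T) := hbd T hTx
    have hh'T : h' T ≤ c * Real.exp (ε * T) := hbd' T hTx
    have hT00 : 0 ≤ h T := hpos T hT
    have hT00' : 0 ≤ h' T := hpos' T hT
    have eexp : Real.exp (ε * T) * Real.exp (ε * T) * Real.exp (-γ * T)
        = Real.exp ((2 * ε - γ) * T) := by
      rw [← Real.exp_add, ← Real.exp_add]
      ring_nf
    have bd1 : h T * h' T * Real.exp (-γ * T) ≤ c ^ 2 * Real.exp ((2 * ε - γ) * T) := by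
      have : h T * h' T ≤ (c * Real.exp (ε * T)) * (c * Real.exp (ε * T)) :=
        mul_le_mul hhT hh'T hT00' (by positivity)
      calc h T * h' T * Real.exp (-γ * T)
          ≤ (c * Real.exp (ε * T)) * (c * Real.exp (ε * T)) * Real.exp (-γ * T) :=
            mul_le_mul_of_nonneg_right this (Real.exp_nonneg _)
        _ = c ^ 2 * (Real.exp (ε * T) * Real.exp (ε * T) * Real.exp (-γ * T)) := by ring
        _ = c ^ 2 * Real.exp ((2 * ε - γ) * T) := by rw [eexp]
    have bd2 : h T ^ 2 / 2 * Real.exp (-γ * T)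
        ≤ c ^ 2 / 2 * Real.exp ((2 * ε - γ) * T) := by
      have : h T ^ 2 ≤ (c * Real.exp (ε * T)) * (c * Real.exp (ε * T)) := by
        rw [sq]
        exact mul_le_mul hhT hhT hT00 (by positivity)
      calc h T ^ 2 / 2 * Real.exp (-γ * T)
          ≤ (c * Real.exp (ε * T)) * (c * Real.exp (ε * T)) / 2 * Real.exp (-γ * T) := by
            apply mul_le_mul_of_nonneg_right _ (Real.exp_nonneg _)
            linarith
        _ = c ^ 2 / 2 * (Real.exp (ε * T) * Real.exp (ε * T) * Real.exp (-γ * T)) := by ring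
        _ = c ^ 2 / 2 * Real.exp ((2 * ε - γ) * T) := by rw [eexp]
    -- combine
    have e1 : (∫ x in (0:ℝ)..T, h' x ^ 2 * Real.exp (-γ * x))
        = h T * h' T * Real.exp (-γ * T) - h 0 * h' 0 * Real.exp (-γ * 0)
          - (∫ x in (0:ℝ)..T, h x * h'' x * Real.exp (-γ * x))
          + γ * ∫ x in (0:ℝ)..T, h x * h' x * Real.exp (-γ * x) := by
      rw [← ftc1, split1]; ring
    have e2 : (∫ x in (0:ℝ)..T, h x * h' x * Real.exp (-γ * x))
        = h T ^ 2 / 2 * Real.exp (-γ * T) - h 0 ^ 2 / 2 * Real.exp (-γ * 0)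
          + γ / 2 * ∫ x in (0:ℝ)..T, h x ^ 2 * Real.exp (-γ * x) := by
      rw [← ftc2, split2]; ring
    rw [e1, e2]
    have hγ' : (0:ℝ) ≤ γ := hγ.le
    have nI4 : (0:ℝ) ≤ ∫ x in (0:ℝ)..T, h x ^ 2 * Real.exp (-γ * x) :=
      intervalIntegral.integral_nonneg hT (fun u _ =>
        mul_nonneg (sq_nonneg _) (Real.exp_nonneg _))
    have expand : K * Real.exp ((2 * ε - γ) * T)
        = c ^ 2 * Real.exp ((2 * ε - γ) * T)
          + γ * (c ^ 2 / 2 * Real.exp ((2 * ε - γ) * T)) := by rw [hK]; ring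
    have bd2' := mul_le_mul_of_nonneg_left bd2 hγ'
    have h1 := mul_nonneg hγ' hT0'
    linarith [bd1, bd2', h1, hT0, n2]
  -- notation for the two lintegrals
  set C : ℝ≥0∞ := ENNReal.ofReal (γ ^ 2 / 2) *
      ∫⁻ x in Set.Ioi (0 : ℝ), ENNReal.ofReal (h x ^ 2 * Real.exp (-γ * x)) with hC
  -- per-n ENNReal inequality
  have keyE : ∀ n : ℕ, x₀ ≤ (n : ℝ) →
      (∫⁻ x in Set.Ioc (0:ℝ) (n:ℝ), ENNReal.ofReal (h' x ^ 2 * Real.exp (-γ * x)))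
        ≤ ENNReal.ofReal (K * Real.exp ((2 * ε - γ) * n)) + C := by
    intro n hn
    have hn0 : (0:ℝ) ≤ (n:ℝ) := Nat.cast_nonneg n
    have hIcc : Set.Icc (0:ℝ) (n:ℝ) ⊆ Set.Ici 0 := Set.Icc_subset_Ici_self
    have i1 : IntervalIntegrable (fun x => h' x ^ 2 * Real.exp (-γ * x)) volume 0 n :=
      (((hch'.mono hIcc).pow 2).mul contE.continuousOn).intervalIntegrable_of_Icc hn0
    have i4 : IntervalIntegrable (fun x => h x ^ 2 * Real.exp (-γ * x)) volume 0 n :=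
      (((hch.mono hIcc).pow 2).mul contE.continuousOn).intervalIntegrable_of_Icc hn0
    have hi1 : IntegrableOn (fun x => h' x ^ 2 * Real.exp (-γ * x)) (Set.Ioc 0 (n:ℝ)) :=
      (intervalIntegrable_iff_integrableOn_Ioc_of_le hn0).1 i1
    have hi4 : IntegrableOn (fun x => h x ^ 2 * Real.exp (-γ * x)) (Set.Ioc 0 (n:ℝ)) :=
      (intervalIntegrable_iff_integrableOn_Ioc_of_le hn0).1 i4
    have nn1 : (0:ℝ → ℝ) ≤ᵐ[volume.restrict (Set.Ioc (0:ℝ) n)]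
        fun x => h' x ^ 2 * Real.exp (-γ * x) :=
      Filter.Eventually.of_forall fun x => mul_nonneg (sq_nonneg _) (Real.exp_nonneg _)
    have nn4 : (0:ℝ → ℝ) ≤ᵐ[volume.restrict (Set.Ioc (0:ℝ) n)]
        fun x => h x ^ 2 * Real.exp (-γ * x) :=
      Filter.Eventually.of_forall fun x => mul_nonneg (sq_nonneg _) (Real.exp_nonneg _)
    have L1 : (∫⁻ x in Set.Ioc (0:ℝ) (n:ℝ), ENNReal.ofReal (h' x ^ 2 * Real.exp (-γ * x)))
        = ENNReal.ofReal (∫ x in (0:ℝ)..(n:ℝ), h' x ^ 2 * Real.exp (-γ * x)) := by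
      rw [intervalIntegral.integral_of_le hn0,
        MeasureTheory.ofReal_integral_eq_lintegral_ofReal hi1 nn1]
    have L4 : ENNReal.ofReal (∫ x in (0:ℝ)..(n:ℝ), h x ^ 2 * Real.exp (-γ * x))
        = (∫⁻ x in Set.Ioc (0:ℝ) (n:ℝ), ENNReal.ofReal (h x ^ 2 * Real.exp (-γ * x))) := by
      rw [intervalIntegral.integral_of_le hn0,
        MeasureTheory.ofReal_integral_eq_lintegral_ofReal hi4 nn4]
    rw [L1]
    calc ENNReal.ofReal (∫ x in (0:ℝ)..(n:ℝ), h' x ^ 2 * Real.exp (-γ * x))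
        ≤ ENNReal.ofReal (K * Real.exp ((2 * ε - γ) * n)
            + γ ^ 2 / 2 * ∫ x in (0:ℝ)..(n:ℝ), h x ^ 2 * Real.exp (-γ * x)) :=
          ENNReal.ofReal_le_ofReal (key n hn0 hn)
      _ ≤ ENNReal.ofReal (K * Real.exp ((2 * ε - γ) * n))
            + ENNReal.ofReal (γ ^ 2 / 2 * ∫ x in (0:ℝ)..(n:ℝ), h x ^ 2 * Real.exp (-γ * x)) :=
          ENNReal.ofReal_add_le
      _ = ENNReal.ofReal (K * Real.exp ((2 * ε - γ) * n))
            + ENNReal.ofReal (γ ^ 2 / 2) *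
              ENNReal.ofReal (∫ x in (0:ℝ)..(n:ℝ), h x ^ 2 * Real.exp (-γ * x)) := by
          congr 1
          exact ENNReal.ofReal_mul (by positivity)
      _ ≤ ENNReal.ofReal (K * Real.exp ((2 * ε - γ) * n)) + C := by
          gcongr
          rw [L4, hC]
          gcongr
          exact Set.Ioc_subset_Ioi_self
  -- monotone convergence along the exhaustion Ioc 0 n
  have cover : AECover (volume.restrict (Set.Ioi (0:ℝ))) atTop
      (fun n : ℕ => Set.Ioc (0:ℝ) (n:ℝ)) := by
    constructor
    · filter_upwards [self_mem_ae_restrict measurableSet_Ioi] with x hx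
      filter_upwards [eventually_ge_atTop ⌈x⌉₊] with n hn
      exact ⟨hx, le_trans (Nat.le_ceil x) (Nat.cast_le.2 hn)⟩
    · exact fun n => measurableSet_Ioc
  have meas : AEMeasurable (fun x => ENNReal.ofReal (h' x ^ 2 * Real.exp (-γ * x)))
      (volume.restrict (Set.Ioi (0:ℝ))) := by
    apply ENNReal.measurable_ofReal.comp_aemeasurable
    exact (((hch'.mono Set.Ioi_subset_Ici_self).pow 2).mul
      contE.continuousOn).aemeasurable measurableSet_Ioi
  have tend := cover.lintegral_tendsto_of_nat meas
  have tend' : Tendsto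
      (fun n : ℕ => ∫⁻ x in Set.Ioc (0:ℝ) (n:ℝ), ENNReal.ofReal (h' x ^ 2 * Real.exp (-γ * x)))
      atTop (𝓝 (∫⁻ x in Set.Ioi (0:ℝ), ENNReal.ofReal (h' x ^ 2 * Real.exp (-γ * x)))) := by
    refine tend.congr fun n => ?_
    rw [Measure.restrict_restrict measurableSet_Ioc,
      Set.inter_eq_self_of_subset_left Set.Ioc_subset_Ioi_self]
  -- the boundary term tends to zero
  have texp : Tendsto (fun n : ℕ => K * Real.exp ((2 * ε - γ) * n)) atTop (𝓝 0) := by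
    have h1 : Tendsto (fun n : ℕ => (2 * ε - γ) * (n:ℝ)) atTop atBot := by
      apply (tendsto_const_mul_atBot_of_neg (by linarith)).2
      exact tendsto_natCast_atTop_atTop
    have h2 : Tendsto (fun n : ℕ => Real.exp ((2 * ε - γ) * n)) atTop (𝓝 0) :=
      Real.tendsto_exp_atBot.comp h1
    simpa using h2.const_mul K
  have tendB : Tendsto
      (fun n : ℕ => ENNReal.ofReal (K * Real.exp ((2 * ε - γ) * n)) + C)
      atTop (𝓝 (0 + C)) := by
    refine Tendsto.add ?_ tendsto_const_nhds
    have := (ENNReal.continuous_ofReal.tendsto 0).comp texp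
    simpa [Function.comp_def] using this
  rw [show C = 0 + C from (zero_add C).symm]
  apply le_of_tendsto_of_tendsto tend' tendB
  filter_upwards [eventually_ge_atTop ⌈x₀⌉₊] with n hn
  exact keyE n (le_trans (Nat.le_ceil x₀) (Nat.cast_le.2 hn))
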